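/- arXiv:1903.11477 — 3 statements merged into one kernel-verified Lean document; each statement's English description precedes it below -/
import Mathlib

section
/- Let g ≥ 1 be an integer. For each natural number n, let f_n ∈ ℚ be the coefficient of x^n in the formal power series (x−2)^{n+1−2g} · (1+x)^{n−g} · (1−x)^{−(n+g)} · (1−2x)^{g} ∈ ℚ[[x]]. Let S ∈ ℚ[[q]] be any formal power series with constant coefficient 1 satisfying S² = (1−q)·(1−9q). Then in ℚ[[q]] one has ∑_{n≥0} (−1)^n · f_n · q^n = −2^{−g} · (1−q)^{g−1} · (1 + (1−3q)·S^{−1})^{1−g}, where 1 + (1−3q)·S^{−1} has constant coefficient 2, hence is a unit, and its (1−g)-th power is taken in the group of units of ℚ[[q]]. -/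
open PowerSeries

namespace VWaux

noncomputable section

lemma coeff_aeval_eq_zero (V : PowerSeries ℚ) (n : ℕ) (p : Polynomial ℚ)
    (hp : ∀ m ≤ n, p.coeff m = 0) :
    (coeff n) (Polynomial.aeval ((X : ℚ⟦X⟧) * V) p) = 0 := by
  obtain ⟨q, hq⟩ : (Polynomial.X : Polynomial ℚ) ^ (n + 1) ∣ p :=
    Polynomial.X_pow_dvd_iff.mpr fun d hd => hp d (Nat.lt_succ_iff.mp hd)
  have h2 : Polynomial.aeval ((X : ℚ⟦X⟧) * V) p
      = X ^ (n + 1) * (V ^ (n + 1) * Polynomial.aeval ((X : ℚ⟦X⟧) * V) q) := by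
    rw [hq, map_mul, map_pow, Polynomial.aeval_X, mul_pow]
    ring
  rw [h2]
  exact PowerSeries.X_pow_dvd_iff.mp ⟨_, rfl⟩ n (Nat.lt_succ_self n)

def compFun (V f : ℚ⟦X⟧) : ℚ⟦X⟧ :=
  PowerSeries.mk fun n => (coeff n) (Polynomial.aeval ((X : ℚ⟦X⟧) * V) (trunc (n + 1) f))

lemma coeff_compFun (V f : ℚ⟦X⟧) (n : ℕ) (p : Polynomial ℚ)
    (hp : ∀ m ≤ n, p.coeff m = coeff m f) :
    coeff n (compFun V f) = coeff n (Polynomial.aeval ((X : ℚ⟦X⟧) * V) p) := by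
  rw [compFun, coeff_mk]
  have h0 : ∀ m ≤ n, (trunc (n + 1) f - p).coeff m = 0 := by
    intro m hm
    rw [Polynomial.coeff_sub, coeff_trunc, if_pos (Nat.lt_succ_iff.mpr hm), hp m hm, sub_self]
  have h1 := coeff_aeval_eq_zero V n _ h0
  rw [map_sub, map_sub, sub_eq_zero] at h1
  exact h1

lemma compFun_one (V : ℚ⟦X⟧) : compFun V 1 = 1 := by
  ext n
  rw [coeff_compFun V 1 n 1 (fun m _ => by
    rw [Polynomial.coeff_one, PowerSeries.coeff_one]), map_one]

lemma compFun_mul (V f g : ℚ⟦X⟧) : compFun V (f * g) = compFun V f * compFun V g := by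
  ext n
  have hmul : ∀ m ≤ n, (trunc (n+1) f * trunc (n+1) g).coeff m = coeff m (f * g) := by
    intro m hm
    rw [Polynomial.coeff_mul, PowerSeries.coeff_mul]
    refine Finset.sum_congr rfl fun ij hij => ?_
    have hij' := Finset.HasAntidiagonal.mem_antidiagonal.mp hij
    rw [coeff_trunc, coeff_trunc, if_pos (by omega), if_pos (by omega)]
  rw [coeff_compFun V (f*g) n (trunc (n+1) f * trunc (n+1) g) hmul, map_mul,
    PowerSeries.coeff_mul, PowerSeries.coeff_mul]
  refine Finset.sum_congr rfl fun ij hij => ?_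
  have hij' := Finset.HasAntidiagonal.mem_antidiagonal.mp hij
  rw [coeff_compFun V f ij.1 (trunc (n+1) f)
      (fun m hm => by rw [coeff_trunc, if_pos (by omega)]),
    coeff_compFun V g ij.2 (trunc (n+1) g)
      (fun m hm => by rw [coeff_trunc, if_pos (by omega)])]

lemma compFun_add (V f g : ℚ⟦X⟧) : compFun V (f + g) = compFun V f + compFun V g := by
  ext n
  have hadd : ∀ m ≤ n, (trunc (n+1) f + trunc (n+1) g).coeff m = coeff m (f + g) := by
    intro m hm
    rw [Polynomial.coeff_add, coeff_trunc, coeff_trunc, if_pos (by omega), if_pos (by omega),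
      map_add]
  rw [coeff_compFun V (f+g) n _ hadd, map_add, map_add, map_add,
    coeff_compFun V f n (trunc (n+1) f) (fun m hm => by rw [coeff_trunc, if_pos (by omega)]),
    coeff_compFun V g n (trunc (n+1) g) (fun m hm => by rw [coeff_trunc, if_pos (by omega)])]

def compHom (V : ℚ⟦X⟧) : ℚ⟦X⟧ →+* ℚ⟦X⟧ :=
  RingHom.mk'
    { toFun := compFun V
      map_one' := compFun_one V
      map_mul' := compFun_mul V }
    (compFun_add V)

lemma compHom_apply (V f : ℚ⟦X⟧) : compHom V f = compFun V f := rfl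

lemma compHom_X (V : ℚ⟦X⟧) : compHom V X = X * V := by
  ext n
  rw [compHom_apply, coeff_compFun V X n Polynomial.X
    (fun m _ => by rw [Polynomial.coeff_X, PowerSeries.coeff_X]; simp [eq_comm]),
    Polynomial.aeval_X]



lemma key_poly (V W : ℚ⟦X⟧) (hVW : V * W = 1) (n : ℕ) (p : Polynomial ℚ) :
    coeff n (p : ℚ⟦X⟧) =
      coeff n (Polynomial.aeval ((X : ℚ⟦X⟧) * V) p *
        (W ^ (n + 1) * d⁄dX ℚ ((X : ℚ⟦X⟧) * V))) := by
  have hWV : W * V = 1 := by rw [mul_comm]; exact hVW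
  have hD : d⁄dX ℚ ((X : ℚ⟦X⟧) * V) = V + X * d⁄dX ℚ V := by
    rw [Derivation.leibniz, smul_eq_mul, smul_eq_mul, derivative_X, mul_one]
    ring
  induction p using Polynomial.induction_on' with
  | add p q hp hq =>
    rw [Polynomial.coe_add, map_add, map_add, add_mul, map_add, hp, hq]
  | monomial k a =>
    rw [Polynomial.aeval_monomial, ← C_eq_algebraMap]
    have hLHS : coeff n ((Polynomial.monomial k a : Polynomial ℚ) : ℚ⟦X⟧)
        = if n = k then a else 0 := by
      rw [Polynomial.coeff_coe, Polynomial.coeff_monomial]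
      simp [eq_comm]
    rw [hLHS, hD]
    rcases le_or_gt k n with hk | hk
    · set j := n - k with hj
      have hn : n = j + k := by omega
      have hW : W ^ (n+1) = W ^ k * W ^ (j+1) := by rw [← pow_add]; congr 1; omega
      have hVWk : V ^ k * W ^ k = 1 := by rw [← mul_pow, hVW, one_pow]
      have hWj : W ^ (j+1) * V = W ^ j := by rw [pow_succ, mul_assoc, hWV, mul_one]
      have hexp : C a * ((X : ℚ⟦X⟧) * V) ^ k * (W ^ (n+1) * (V + X * d⁄dX ℚ V))
          = X ^ k * (C a * (W ^ j + X * (W ^ (j+1) * d⁄dX ℚ V))) := by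
        calc C a * ((X : ℚ⟦X⟧) * V) ^ k * (W ^ (n+1) * (V + X * d⁄dX ℚ V))
            = (V ^ k * W ^ k) * (X ^ k *
              (C a * (W ^ (j+1) * V + X * (W ^ (j+1) * d⁄dX ℚ V)))) := by
              rw [mul_pow, hW]; ring
          _ = X ^ k * (C a * (W ^ j + X * (W ^ (j+1) * d⁄dX ℚ V))) := by
              rw [hVWk, hWj, one_mul]
      rw [hexp, hn, coeff_X_pow_mul]
      rw [coeff_C_mul, map_add]
      rcases Nat.eq_zero_or_eq_succ_pred j with hj0 | hjs
      · -- j = 0, k = n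
        rw [hj0]
        have : n = k := by omega
        simp [this, coeff_zero_eq_constantCoeff, map_mul, constantCoeff_X]
      · set s := j - 1 with hs
        have hjs' : j = s + 1 := by omega
        have hnk : ¬ (n = k) := by omega
        rw [if_neg (show ¬ (j + k = k) by omega), hjs', coeff_succ_X_mul]
        -- need : coeff (s+1) (W^(s+1)) + coeff s (W^(s+2) * dV) = 0
        have h1 : V * d⁄dX ℚ W + W * d⁄dX ℚ V = 0 := by
          have h := congrArg (d⁄dX ℚ) hVW
          rw [Derivation.leibniz, smul_eq_mul, smul_eq_mul, Derivation.map_one_eq_zero] at h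
          linear_combination h
        have h2 : W ^ (s+1+1) * d⁄dX ℚ V = -(W ^ s * d⁄dX ℚ W) := by
          have e1 : W ^ (s+1+1) * d⁄dX ℚ V = W ^ (s+1) * (W * d⁄dX ℚ V) := by ring
          have e2 : W * d⁄dX ℚ V = -(V * d⁄dX ℚ W) := by linear_combination h1
          rw [e1, e2]
          calc W ^ (s+1) * -(V * d⁄dX ℚ W) = -((W ^ s * (W * V)) * d⁄dX ℚ W) := by ring
            _ = -(W ^ s * d⁄dX ℚ W) := by rw [hWV, mul_one]
        have h3 : d⁄dX ℚ (W ^ (s+1)) = (s+1 : ℕ) • (W ^ s • d⁄dX ℚ W) := by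
          have := Derivation.leibniz_pow (d⁄dX ℚ) (a := W) (s+1)
          simpa using this
        have h4 : coeff (s+1) (W ^ (s+1)) * ((s:ℚ)+1)
            = ((s:ℚ)+1) * coeff s (W ^ s * d⁄dX ℚ W) := by
          have h5 := congrArg (coeff s) h3
          rw [coeff_derivative, smul_eq_mul, map_nsmul, nsmul_eq_mul] at h5
          push_cast at h5
          linear_combination h5
        have hs1 : ((s:ℚ)+1) ≠ 0 := by positivity
        have h6 : coeff (s+1) (W ^ (s+1)) = coeff s (W ^ s * d⁄dX ℚ W) := by
          refine mul_right_cancel₀ hs1 ?_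
          linear_combination h4
        rw [h2, map_neg, h6]
        ring
    · -- k > n
      have hnk : ¬ (n = k) := by omega
      rw [if_neg hnk]
      have hexp : C a * ((X : ℚ⟦X⟧) * V) ^ k * (W ^ (n+1) * (V + X * d⁄dX ℚ V))
          = X ^ k * (C a * V ^ k * (W ^ (n+1) * (V + X * d⁄dX ℚ V))) := by
        rw [mul_pow]; ring
      rw [hexp]
      exact (PowerSeries.X_pow_dvd_iff.mp ⟨_, rfl⟩ n hk).symm

lemma key (V W f : ℚ⟦X⟧) (hVW : V * W = 1) (n : ℕ) :
    coeff n f =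
      coeff n (compFun V f * (W ^ (n + 1) * d⁄dX ℚ ((X : ℚ⟦X⟧) * V))) := by
  have h1 : coeff n f = coeff n ((trunc (n+1) f : ℚ⟦X⟧)) := by
    rw [Polynomial.coeff_coe, coeff_trunc, if_pos (Nat.lt_succ_self n)]
  rw [h1, key_poly V W hVW n (trunc (n+1) f), PowerSeries.coeff_mul, PowerSeries.coeff_mul]
  refine Finset.sum_congr rfl fun ij hij => ?_
  have hij' := Finset.HasAntidiagonal.mem_antidiagonal.mp hij
  rw [coeff_compFun V f ij.1 (trunc (n+1) f)
    (fun m hm => by rw [coeff_trunc, if_pos (by omega)])]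


end

end VWaux

/-- Signed generating function identity for the monopole-branch
Vafa–Witten contributions.  `f n` is the coefficient of `x^n` in
`(x−2)^{n+1−2g} (1+x)^{n−g} (1−x)^{−(n+g)} (1−2x)^g`, the powers being taken in
the group of units of `ℚ[[x]]`.  If `S ∈ ℚ[[q]]` has constant coefficient `1`
and `S² = (1−q)(1−9q)`, then
`∑ (−1)^n f n q^n = −2^{−g} (1−q)^{g−1} (1 + (1−3q) S⁻¹)^{1−g}`. -/
theorem vafaWitten_generating_function_signed
    (g : ℕ) (hg : 1 ≤ g)
    (u₁ u₂ u₃ u₄ : (PowerSeries ℚ)ˣ)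
    (hu₁ : (u₁ : PowerSeries ℚ) = X - 2)
    (hu₂ : (u₂ : PowerSeries ℚ) = 1 + X)
    (hu₃ : (u₃ : PowerSeries ℚ) = 1 - X)
    (hu₄ : (u₄ : PowerSeries ℚ) = 1 - 2 * X)
    (f : ℕ → ℚ)
    (hf : ∀ n : ℕ, f n =
      coeff n
        ((u₁ ^ ((n : ℤ) + 1 - 2 * (g : ℤ)) * u₂ ^ ((n : ℤ) - (g : ℤ)) *
          u₃ ^ (-((n : ℤ) + (g : ℤ))) * u₄ ^ (g : ℤ) : (PowerSeries ℚ)ˣ) : PowerSeries ℚ))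
    (S : PowerSeries ℚ)
    (hS0 : constantCoeff S = 1)
    (hSsq : S ^ 2 = (1 - X) * (1 - 9 * X))
    (Su : (PowerSeries ℚ)ˣ) (hSu : (Su : PowerSeries ℚ) = S)
    (v : (PowerSeries ℚ)ˣ) (hv : (v : PowerSeries ℚ) = 1 - X)
    (w : (PowerSeries ℚ)ˣ)
    (hw : (w : PowerSeries ℚ) =
      1 + (1 - 3 * X) * ((Su⁻¹ : (PowerSeries ℚ)ˣ) : PowerSeries ℚ))
    (hw0 : constantCoeff (w : PowerSeries ℚ) = 2) :
    PowerSeries.mk (fun n => (-1 : ℚ) ^ n * f n) =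
      C (-(2 : ℚ) ^ (-(g : ℤ))) *
        ((v ^ ((g : ℤ) - 1) * w ^ (1 - (g : ℤ)) : (PowerSeries ℚ)ˣ) : PowerSeries ℚ) := by
  obtain ⟨m, rfl⟩ : ∃ m, g = m + 1 := ⟨g - 1, by omega⟩
  have hSS : S * ((Su⁻¹ : (PowerSeries ℚ)ˣ) : PowerSeries ℚ) = 1 := by
    rw [← hSu]; exact Su.mul_inv
  have hvv : (1 - X : ℚ⟦X⟧) * ((v⁻¹ : (PowerSeries ℚ)ˣ) : PowerSeries ℚ) = 1 := by
    rw [← hv]; exact v.mul_inv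
  have hww : (w : ℚ⟦X⟧) * ((w⁻¹ : (PowerSeries ℚ)ˣ) : PowerSeries ℚ) = 1 := w.mul_inv
  have hvne : (1 - X : ℚ⟦X⟧) ≠ 0 := by rw [← hv]; exact v.ne_zero
  have hSne : S ≠ 0 := by
    intro h; rw [h, map_zero] at hS0; exact zero_ne_one hS0
  have h2C : (2 : ℚ⟦X⟧) * C 2⁻¹ = 1 := by
    rw [show (2 : ℚ⟦X⟧) = C 2 from (map_ofNat C 2).symm, ← map_mul]
    norm_num
  obtain ⟨u, hu_def⟩ : ∃ u : ℚ⟦X⟧,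
      u = C 2⁻¹ * ((1 - X - S) * ((v⁻¹ : (PowerSeries ℚ)ˣ) : PowerSeries ℚ)) := ⟨_, rfl⟩
  have R2 : 2 * ((1 - X) * u) = 1 - X - S := by
    rw [hu_def]
    calc 2 * ((1 - X) * (C 2⁻¹ * ((1 - X - S) * ((v⁻¹ : (PowerSeries ℚ)ˣ) : PowerSeries ℚ))))
        = (2 * C 2⁻¹) *
            (((1 - X) * ((v⁻¹ : (PowerSeries ℚ)ˣ) : PowerSeries ℚ)) * (1 - X - S)) := by ring
      _ = 1 - X - S := by rw [h2C, hvv, one_mul, one_mul]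
  have hu0 : constantCoeff u = 0 := by
    have h := congrArg (constantCoeff) R2
    simp only [map_mul, map_sub, map_one, constantCoeff_X, map_ofNat, hS0] at h
    linarith
  obtain ⟨V, hXV⟩ : (X : ℚ⟦X⟧) ∣ u := X_dvd_iff.mpr hu0
  have hXne : (X : ℚ⟦X⟧) ≠ 0 := X_ne_zero
  have h1u : (1 - X) * u * 2 = 1 - X - S := by linear_combination R2
  have h2u : (1 - X) * (1 - u) * 2 = 1 - X + S := by linear_combination -R2
  have E8' : (4 : ℚ⟦X⟧) * (1 - X) * ((1 - X) * (u * (1 - u))) = 4 * (1 - X) * (2 * X) := by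
    have h3 : ((1 - X) * u * 2) * ((1 - X) * (1 - u) * 2) = (1 - X - S) * (1 - X + S) := by
      rw [h1u, h2u]
    linear_combination h3 - hSsq
  have h40 : (4 : ℚ⟦X⟧) * (1 - X) ≠ 0 := by
    refine mul_ne_zero ?_ hvne
    intro h
    have h' := congrArg (constantCoeff) h
    rw [map_ofNat, map_zero] at h'
    norm_num at h'
  have E8 : (1 - X) * (u * (1 - u)) = 2 * X := by
    apply mul_left_cancel₀ h40
    linear_combination E8'
  have E9 : (1 - X) * (2 + u - u ^ 2) = 2 := by linear_combination E8
  have R6 : S = (1 - X) * (1 - 2 * u) := by linear_combination R2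
  have P1 : V * (1 - u) = (2 - u) * (1 + u) := by
    apply mul_left_cancel₀ hXne
    calc (X : ℚ⟦X⟧) * (V * (1 - u)) = u * (1 - u) := by rw [← mul_assoc, ← hXV]
      _ = X * ((2 - u) * (1 + u)) := by linear_combination E8
  have hV0 : constantCoeff V = 2 := by
    have h := congrArg (constantCoeff) P1
    simp only [map_mul, map_sub, map_add, map_one, hu0, map_ofNat] at h
    linarith
  obtain ⟨Vu, hVu⟩ : IsUnit V := by
    rw [PowerSeries.isUnit_iff_constantCoeff, hV0]
    exact isUnit_iff_ne_zero.mpr two_ne_zero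
  obtain ⟨W, hW_def⟩ : ∃ W : ℚ⟦X⟧, W = ((Vu⁻¹ : (PowerSeries ℚ)ˣ) : PowerSeries ℚ) := ⟨_, rfl⟩
  have hVW : V * W = 1 := by rw [hW_def, ← hVu]; exact Vu.mul_inv
  have P2 : S * ((2 - u) * (1 + u)) = 2 * (1 - 2 * u) := by
    linear_combination (2 + u - u ^ 2) * R6 + (1 - 2 * u) * E9
  have hd2X : d⁄dX ℚ (2 * X : ℚ⟦X⟧) = 2 := by
    have h : (2 * X : ℚ⟦X⟧) = C 2 * X := by rw [map_ofNat]
    rw [h, Derivation.leibniz, smul_eq_mul, smul_eq_mul, derivative_C, derivative_X,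
      mul_one, mul_zero, add_zero, map_ofNat]
  have hd1 : d⁄dX ℚ ((1 - X) * (u * (1 - u)))
      = (1 - X) * ((d⁄dX ℚ u) * (1 - u) + u * (0 - d⁄dX ℚ u))
        + (u * (1 - u)) * (0 - 1) := by
    rw [Derivation.leibniz, Derivation.leibniz, smul_eq_mul, smul_eq_mul, smul_eq_mul,
      smul_eq_mul, map_sub, map_sub, Derivation.map_one_eq_zero, derivative_X]
    ring
  have D8 : (1 - X) * ((d⁄dX ℚ u) * (1 - u) - u * d⁄dX ℚ u) - u * (1 - u) = 2 := by
    have h := congrArg (d⁄dX ℚ) E8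
    rw [hd1, hd2X] at h
    linear_combination h
  have P3 : (d⁄dX ℚ u) * S = (2 - u) * (1 + u) := by
    linear_combination (d⁄dX ℚ u) * R6 + D8
  have E7 : (w : ℚ⟦X⟧) * S = S + (1 - 3 * X) := by
    rw [hw]
    linear_combination (1 - 3 * X) * hSS
  have E4 : S + (1 - 3 * X) = (1 - X) * ((2 - u) * (1 - u)) := by
    linear_combination R6 - E9 + 2 * E8
  have P4 : 2 * ((w : ℚ⟦X⟧) * (1 - 2 * u)) = (1 - X) * ((u - 2) ^ 2 * ((1 + u) * (1 - u))) := by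
    apply mul_left_cancel₀ hSne
    calc S * (2 * ((w : ℚ⟦X⟧) * (1 - 2 * u))) = 2 * (1 - 2 * u) * ((w : ℚ⟦X⟧) * S) := by ring
      _ = 2 * (1 - 2 * u) * ((1 - X) * ((2 - u) * (1 - u))) := by rw [E7, E4]
      _ = ((1 - X) * ((2 - u) * (1 - u))) * (2 * (1 - 2 * u)) := by ring
      _ = ((1 - X) * ((2 - u) * (1 - u))) * (S * ((2 - u) * (1 + u))) := by rw [P2]
      _ = S * ((1 - X) * ((u - 2) ^ 2 * ((1 + u) * (1 - u)))) := by ring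
  -- composition images
  have hcX : VWaux.compHom V X = X * V := VWaux.compHom_X V
  have hs1 : VWaux.compHom V ((u₁ : ℚ⟦X⟧)) = u - 2 := by
    rw [hu₁, map_sub, hcX, ← hXV, map_ofNat]
  have hs2 : VWaux.compHom V ((u₂ : ℚ⟦X⟧)) = 1 + u := by
    rw [hu₂, map_add, map_one, hcX, ← hXV]
  have hs3 : VWaux.compHom V ((u₃ : ℚ⟦X⟧)) = 1 - u := by
    rw [hu₃, map_sub, map_one, hcX, ← hXV]
  have hs4 : VWaux.compHom V ((u₄ : ℚ⟦X⟧)) = 1 - 2 * u := by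
    rw [hu₄, map_sub, map_one, map_mul, map_ofNat, hcX, ← hXV]
  obtain ⟨A', hA'def⟩ : ∃ y : ℚ⟦X⟧, y = VWaux.compHom V ((u₁⁻¹ : (PowerSeries ℚ)ˣ) : ℚ⟦X⟧) :=
    ⟨_, rfl⟩
  obtain ⟨B', hB'def⟩ : ∃ y : ℚ⟦X⟧, y = VWaux.compHom V ((u₂⁻¹ : (PowerSeries ℚ)ˣ) : ℚ⟦X⟧) :=
    ⟨_, rfl⟩
  obtain ⟨C', hC'def⟩ : ∃ y : ℚ⟦X⟧, y = VWaux.compHom V ((u₃⁻¹ : (PowerSeries ℚ)ˣ) : ℚ⟦X⟧) :=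
    ⟨_, rfl⟩
  have ha : (u - 2) * A' = 1 := by
    rw [← hs1, hA'def, ← map_mul, Units.mul_inv, map_one]
  have hb : (1 + u) * B' = 1 := by
    rw [← hs2, hB'def, ← map_mul, Units.mul_inv, map_one]
  have hc : (1 - u) * C' = 1 := by
    rw [← hs3, hC'def, ← map_mul, Units.mul_inv, map_one]
  have hane : (u - 2 : ℚ⟦X⟧) ≠ 0 := left_ne_zero_of_mul_eq_one ha
  have hbne : (1 + u : ℚ⟦X⟧) ≠ 0 := left_ne_zero_of_mul_eq_one hb
  have hcne : (1 - u : ℚ⟦X⟧) ≠ 0 := left_ne_zero_of_mul_eq_one hc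
  have hVne : V ≠ 0 := left_ne_zero_of_mul_eq_one hVW
  have hwne : (w : ℚ⟦X⟧) ≠ 0 := w.ne_zero
  have h2ne : (2 : ℚ⟦X⟧) ≠ 0 := by
    intro h
    have h' := congrArg (constantCoeff) h
    rw [map_ofNat, map_zero] at h'
    norm_num at h'
  have hVB : V = -(VWaux.compHom V ((u₁ * u₂ * u₃⁻¹ : (PowerSeries ℚ)ˣ) : ℚ⟦X⟧)) := by
    apply mul_right_cancel₀ hcne
    rw [Units.val_mul, Units.val_mul, map_mul, map_mul, hs1, hs2, ← hC'def]
    calc V * (1 - u) = (2 - u) * (1 + u) := P1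
      _ = -((u - 2) * (1 + u)) * 1 := by ring
      _ = -((u - 2) * (1 + u)) * ((1 - u) * C') := by rw [hc]
      _ = -((u - 2) * (1 + u) * C') * (1 - u) := by ring
  -- unit-group exponent rearrangement
  have hE : ∀ n : ℕ,
      u₁ ^ ((n : ℤ) + 1 - 2 * ((m + 1 : ℕ) : ℤ)) * u₂ ^ ((n : ℤ) - ((m + 1 : ℕ) : ℤ)) *
        u₃ ^ (-((n : ℤ) + ((m + 1 : ℕ) : ℤ))) * u₄ ^ (((m + 1 : ℕ) : ℤ))
      = (u₁ ^ (-(2 * (m : ℤ) + 1)) * u₂ ^ (-((m : ℤ) + 1)) * u₃ ^ (-((m : ℤ) + 1)) *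
          u₄ ^ ((m : ℤ) + 1)) * (u₁ * u₂ * u₃⁻¹) ^ n := by
    intro n
    rw [show (n : ℤ) + 1 - 2 * ((m + 1 : ℕ) : ℤ) = (-(2 * (m : ℤ) + 1)) + n by push_cast; ring,
      show (n : ℤ) - ((m + 1 : ℕ) : ℤ) = (-((m : ℤ) + 1)) + n by push_cast; ring,
      show -((n : ℤ) + ((m + 1 : ℕ) : ℤ)) = (-((m : ℤ) + 1)) + -(n : ℤ) by push_cast; ring,
      show ((m + 1 : ℕ) : ℤ) = (m : ℤ) + 1 by push_cast; ring,
      zpow_add, zpow_add, zpow_add, zpow_natCast, zpow_natCast, zpow_neg u₃ (n : ℤ),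
      zpow_natCast, ← inv_pow, mul_pow, mul_pow]
    simp only [mul_comm, mul_left_comm, mul_assoc]
  have hfn : ∀ n : ℕ, (-1 : ℚ) ^ n * f n
      = coeff n (((u₁ ^ (-(2 * (m : ℤ) + 1)) * u₂ ^ (-((m : ℤ) + 1)) * u₃ ^ (-((m : ℤ) + 1)) *
            u₄ ^ ((m : ℤ) + 1) : (PowerSeries ℚ)ˣ) : ℚ⟦X⟧) *
          (-(((u₁ * u₂ * u₃⁻¹ : (PowerSeries ℚ)ˣ) : ℚ⟦X⟧))) ^ n) := by
    intro n
    rw [hf n, hE n, Units.val_mul, Units.val_pow_eq_pow_val,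
      neg_pow (((u₁ * u₂ * u₃⁻¹ : (PowerSeries ℚ)ˣ) : ℚ⟦X⟧)) n,
      show ((-1 : ℚ⟦X⟧)) ^ n = C ((-1 : ℚ) ^ n) by rw [map_pow, map_neg, map_one],
      mul_left_comm, coeff_C_mul]
  have hkeyn : ∀ n : ℕ,
      coeff n (((u₁ ^ (-(2 * (m : ℤ) + 1)) * u₂ ^ (-((m : ℤ) + 1)) * u₃ ^ (-((m : ℤ) + 1)) *
            u₄ ^ ((m : ℤ) + 1) : (PowerSeries ℚ)ˣ) : ℚ⟦X⟧) *
          (-(((u₁ * u₂ * u₃⁻¹ : (PowerSeries ℚ)ˣ) : ℚ⟦X⟧))) ^ n)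
      = coeff n (VWaux.compHom V (((u₁ ^ (-(2 * (m : ℤ) + 1)) * u₂ ^ (-((m : ℤ) + 1)) *
            u₃ ^ (-((m : ℤ) + 1)) * u₄ ^ ((m : ℤ) + 1) : (PowerSeries ℚ)ˣ) : ℚ⟦X⟧)) * W *
          d⁄dX ℚ u) := by
    intro n
    rw [VWaux.key V W _ hVW n]
    refine congrArg (coeff n) ?_
    have hcomp : VWaux.compFun V
        ((((u₁ ^ (-(2 * (m : ℤ) + 1)) * u₂ ^ (-((m : ℤ) + 1)) * u₃ ^ (-((m : ℤ) + 1)) *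
            u₄ ^ ((m : ℤ) + 1) : (PowerSeries ℚ)ˣ) : ℚ⟦X⟧)) *
          (-(((u₁ * u₂ * u₃⁻¹ : (PowerSeries ℚ)ˣ) : ℚ⟦X⟧))) ^ n)
        = VWaux.compHom V (((u₁ ^ (-(2 * (m : ℤ) + 1)) * u₂ ^ (-((m : ℤ) + 1)) *
            u₃ ^ (-((m : ℤ) + 1)) * u₄ ^ ((m : ℤ) + 1) : (PowerSeries ℚ)ˣ) : ℚ⟦X⟧)) *
          (-(VWaux.compHom V ((u₁ * u₂ * u₃⁻¹ : (PowerSeries ℚ)ˣ) : ℚ⟦X⟧))) ^ n := by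
      rw [← VWaux.compHom_apply, map_mul, map_pow, map_neg]
    rw [hcomp, ← hVB, ← hXV]
    have hpow : V ^ n * W ^ (n + 1) = W := by
      rw [pow_succ, ← mul_assoc, ← mul_pow, hVW, one_pow, one_mul]
    calc VWaux.compHom V (((u₁ ^ (-(2 * (m : ℤ) + 1)) * u₂ ^ (-((m : ℤ) + 1)) *
            u₃ ^ (-((m : ℤ) + 1)) * u₄ ^ ((m : ℤ) + 1) : (PowerSeries ℚ)ˣ) : ℚ⟦X⟧)) * V ^ n *
          (W ^ (n + 1) * d⁄dX ℚ u)
        = VWaux.compHom V (((u₁ ^ (-(2 * (m : ℤ) + 1)) * u₂ ^ (-((m : ℤ) + 1)) *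
            u₃ ^ (-((m : ℤ) + 1)) * u₄ ^ ((m : ℤ) + 1) : (PowerSeries ℚ)ˣ) : ℚ⟦X⟧)) *
          ((V ^ n * W ^ (n + 1)) * d⁄dX ℚ u) := by ring
      _ = _ := by rw [hpow]; ring
  have hcoeA : (((u₁ ^ (-(2 * (m : ℤ) + 1)) * u₂ ^ (-((m : ℤ) + 1)) * u₃ ^ (-((m : ℤ) + 1)) *
          u₄ ^ ((m : ℤ) + 1) : (PowerSeries ℚ)ˣ) : ℚ⟦X⟧))
      = ((u₁⁻¹ : (PowerSeries ℚ)ˣ) : ℚ⟦X⟧) ^ (2 * m + 1) *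
        ((u₂⁻¹ : (PowerSeries ℚ)ˣ) : ℚ⟦X⟧) ^ (m + 1) *
        ((u₃⁻¹ : (PowerSeries ℚ)ˣ) : ℚ⟦X⟧) ^ (m + 1) * ((u₄ : ℚ⟦X⟧)) ^ (m + 1) := by
    have e : ∀ (x : (PowerSeries ℚ)ˣ) (k : ℕ),
        ((x ^ (-(k : ℤ)) : (PowerSeries ℚ)ˣ) : ℚ⟦X⟧) = ((x⁻¹ : (PowerSeries ℚ)ˣ) : ℚ⟦X⟧) ^ k := by
      intro x k
      rw [zpow_neg, zpow_natCast, ← inv_pow, Units.val_pow_eq_pow_val]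
    rw [Units.val_mul, Units.val_mul, Units.val_mul,
      show -(2 * (m : ℤ) + 1) = -((2 * m + 1 : ℕ) : ℤ) by push_cast; ring,
      show -((m : ℤ) + 1) = -((m + 1 : ℕ) : ℤ) by push_cast; ring,
      show (m : ℤ) + 1 = ((m + 1 : ℕ) : ℤ) by push_cast; ring,
      e, e, e, zpow_natCast, Units.val_pow_eq_pow_val]
  have hcA : VWaux.compHom V (((u₁ ^ (-(2 * (m : ℤ) + 1)) * u₂ ^ (-((m : ℤ) + 1)) *
          u₃ ^ (-((m : ℤ) + 1)) * u₄ ^ ((m : ℤ) + 1) : (PowerSeries ℚ)ˣ) : ℚ⟦X⟧))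
      = A' ^ (2 * m + 1) * B' ^ (m + 1) * C' ^ (m + 1) * (1 - 2 * u) ^ (m + 1) := by
    rw [hcoeA, map_mul, map_mul, map_mul, map_pow, map_pow, map_pow, map_pow, hs4,
      ← hA'def, ← hB'def, ← hC'def]
  have base : A' * B' * C' * (1 - 2 * u) * W * d⁄dX ℚ u = -(C 2⁻¹) := by
    have hM : ((u - 2) * ((1 + u) * ((1 - u) * (V * S))) : ℚ⟦X⟧) ≠ 0 :=
      mul_ne_zero hane (mul_ne_zero hbne (mul_ne_zero hcne (mul_ne_zero hVne hSne)))
    apply mul_right_cancel₀ hM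
    calc (A' * B' * C' * (1 - 2 * u) * W * d⁄dX ℚ u) *
          ((u - 2) * ((1 + u) * ((1 - u) * (V * S))))
        = ((u - 2) * A') * (((1 + u) * B') * (((1 - u) * C') *
            ((V * W) * ((d⁄dX ℚ u * S) * (1 - 2 * u))))) := by ring
      _ = (2 - u) * (1 + u) * (1 - 2 * u) := by rw [ha, hb, hc, hVW, P3]; ring
      _ = -((2 * C 2⁻¹) * ((u - 2) * (1 + u) * (1 - 2 * u))) := by rw [h2C]; ring
      _ = -(C 2⁻¹) * ((u - 2) * (1 + u)) * (2 * (1 - 2 * u)) := by ring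
      _ = -(C 2⁻¹) * ((u - 2) * (1 + u)) * (S * ((2 - u) * (1 + u))) := by rw [P2]
      _ = -(C 2⁻¹) * ((u - 2) * (1 + u)) * (S * (V * (1 - u))) := by rw [P1]
      _ = -(C 2⁻¹) * ((u - 2) * ((1 + u) * ((1 - u) * (V * S)))) := by ring
  have hstep : A' ^ 2 * B' * C' * (1 - 2 * u)
      = C 2⁻¹ * ((1 - X) * ((w⁻¹ : (PowerSeries ℚ)ˣ) : ℚ⟦X⟧)) := by
    have hM2 : ((u - 2) ^ 2 * ((1 + u) * ((1 - u) * (2 * (w : ℚ⟦X⟧)))) : ℚ⟦X⟧) ≠ 0 :=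
      mul_ne_zero (pow_ne_zero 2 hane)
        (mul_ne_zero hbne (mul_ne_zero hcne (mul_ne_zero h2ne hwne)))
    apply mul_right_cancel₀ hM2
    calc (A' ^ 2 * B' * C' * (1 - 2 * u)) *
          ((u - 2) ^ 2 * ((1 + u) * ((1 - u) * (2 * (w : ℚ⟦X⟧)))))
        = ((u - 2) * A') ^ 2 * (((1 + u) * B') * (((1 - u) * C') *
            (2 * ((w : ℚ⟦X⟧) * (1 - 2 * u))))) := by ring
      _ = 2 * ((w : ℚ⟦X⟧) * (1 - 2 * u)) := by rw [ha, hb, hc]; ring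
      _ = (1 - X) * ((u - 2) ^ 2 * ((1 + u) * (1 - u))) := P4
      _ = ((2 : ℚ⟦X⟧) * C 2⁻¹) * ((w : ℚ⟦X⟧) * ((w⁻¹ : (PowerSeries ℚ)ˣ) : ℚ⟦X⟧)) *
            ((1 - X) * ((u - 2) ^ 2 * ((1 + u) * (1 - u)))) := by rw [h2C, hww]; ring
      _ = (C 2⁻¹ * ((1 - X) * ((w⁻¹ : (PowerSeries ℚ)ˣ) : ℚ⟦X⟧))) *
            ((u - 2) ^ 2 * ((1 + u) * ((1 - u) * (2 * (w : ℚ⟦X⟧))))) := by ring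
  have Q : ∀ k : ℕ, A' ^ (2 * k + 1) * B' ^ (k + 1) * C' ^ (k + 1) * (1 - 2 * u) ^ (k + 1) *
        W * d⁄dX ℚ u
      = -((C 2⁻¹) ^ (k + 1)) * ((1 - X) ^ k * ((w⁻¹ : (PowerSeries ℚ)ˣ) : ℚ⟦X⟧) ^ k) := by
    intro k
    induction k with
    | zero => simpa using base
    | succ k ih =>
      calc A' ^ (2 * (k + 1) + 1) * B' ^ (k + 1 + 1) * C' ^ (k + 1 + 1) *
            (1 - 2 * u) ^ (k + 1 + 1) * W * d⁄dX ℚ u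
          = (A' ^ 2 * B' * C' * (1 - 2 * u)) * (A' ^ (2 * k + 1) * B' ^ (k + 1) * C' ^ (k + 1) *
              (1 - 2 * u) ^ (k + 1) * W * d⁄dX ℚ u) := by ring
        _ = (C 2⁻¹ * ((1 - X) * ((w⁻¹ : (PowerSeries ℚ)ˣ) : ℚ⟦X⟧))) *
              (-((C 2⁻¹) ^ (k + 1)) *
                ((1 - X) ^ k * ((w⁻¹ : (PowerSeries ℚ)ˣ) : ℚ⟦X⟧) ^ k)) := by rw [hstep, ih]
        _ = -((C 2⁻¹) ^ (k + 1 + 1)) *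
              ((1 - X) ^ (k + 1) * ((w⁻¹ : (PowerSeries ℚ)ˣ) : ℚ⟦X⟧) ^ (k + 1)) := by ring
  have hRv : ((v ^ (((m + 1 : ℕ) : ℤ) - 1) * w ^ (1 - ((m + 1 : ℕ) : ℤ)) :
        (PowerSeries ℚ)ˣ) : ℚ⟦X⟧)
      = (1 - X) ^ m * ((w⁻¹ : (PowerSeries ℚ)ˣ) : ℚ⟦X⟧) ^ m := by
    rw [Units.val_mul,
      show ((m + 1 : ℕ) : ℤ) - 1 = ((m : ℕ) : ℤ) by push_cast; ring,
      show (1 : ℤ) - ((m + 1 : ℕ) : ℤ) = -((m : ℕ) : ℤ) by push_cast; ring,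
      zpow_natCast, Units.val_pow_eq_pow_val, hv,
      zpow_neg, zpow_natCast, ← inv_pow, Units.val_pow_eq_pow_val]
  have hCconst : C (-(2 : ℚ) ^ (-(((m + 1 : ℕ)) : ℤ))) = -((C 2⁻¹) ^ (m + 1)) := by
    rw [show (-(2 : ℚ) ^ (-(((m + 1 : ℕ)) : ℤ))) = -((2⁻¹ : ℚ) ^ (m + 1)) by
        rw [zpow_neg, zpow_natCast, inv_pow],
      map_neg, map_pow]
  ext n
  rw [coeff_mk, hfn n, hkeyn n]
  refine congrArg (coeff n) ?_
  rw [hcA, hRv, hCconst]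
  linear_combination Q m
end

section
/- Let g ≥ 1 be an integer. For each natural number n, let f_n ∈ ℚ be the coefficient of x^n in the formal power series (x−2)^{n+1−2g} · (1+x)^{n−g} · (1−x)^{−(n+g)} · (1−2x)^{g} ∈ ℚ[[x]]. Let σ ∈ ℚ[[q]] be any formal power series with constant coefficient 1 satisfying (1+q)·σ² = 1+9q. Then in ℚ[[q]] one has ∑_{n≥0} f_n · q^n = −2^{−g} · (1+q)^{g−1} · (1 + (1+3q)·((1+q)σ)^{−1})^{1−g}, where 1 + (1+3q)·((1+q)σ)^{−1} has constant coefficient 2, hence is a unit, and its (1−g)-th power is taken in the group of units of ℚ[[q]]. -/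
open PowerSeries
open PowerSeries Finset
namespace VW
noncomputable section


theorem coeff_pow_eq_zero {a : PowerSeries ℚ} (ha : constantCoeff a = 0)
    {n k : ℕ} (h : n < k) : coeff n (a ^ k) = 0 := by
  have hX : (X : PowerSeries ℚ) ^ k ∣ a ^ k := pow_dvd_pow_of_dvd (X_dvd_iff.mpr ha) k
  exact (X_pow_dvd_iff.mp hX) n h

/-- evaluation of a power series at `a` (with zero constant coefficient) -/
noncomputable def ev (a : PowerSeries ℚ) (p : PowerSeries ℚ) : PowerSeries ℚ :=
  PowerSeries.mk fun n => ∑ k ∈ range (n+1), coeff k p * coeff n (a ^ k)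

theorem coeff_aeval {a : PowerSeries ℚ} (ha : constantCoeff a = 0) (P : Polynomial ℚ) (n : ℕ) :
    coeff n (Polynomial.aeval a P) = ∑ k ∈ range (n+1), P.coeff k * coeff n (a ^ k) := by
  rw [Polynomial.aeval_eq_sum_range, map_sum]
  simp only [LinearMap.map_smul_of_tower, smul_eq_mul]
  have h1 : ∑ i ∈ range (P.natDegree + 1), P.coeff i * coeff n (a ^ i)
      = ∑ i ∈ range (max (P.natDegree + 1) (n+1)), P.coeff i * coeff n (a ^ i) :=
    sum_subset (range_subset_range.mpr (le_max_left _ _)) (by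
      intro x _ hx
      rw [mem_range, not_lt] at hx
      rw [Polynomial.coeff_eq_zero_of_natDegree_lt (by omega), zero_mul])
  have h2 : ∑ i ∈ range (n + 1), P.coeff i * coeff n (a ^ i)
      = ∑ i ∈ range (max (P.natDegree + 1) (n+1)), P.coeff i * coeff n (a ^ i) :=
    sum_subset (range_subset_range.mpr (le_max_right _ _)) (by
      intro x _ hx
      rw [mem_range, not_lt] at hx
      rw [coeff_pow_eq_zero ha (by omega), mul_zero])
  rw [h1, ← h2]

theorem coeff_ev {a : PowerSeries ℚ} (ha : constantCoeff a = 0) (p : PowerSeries ℚ)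
    {n N : ℕ} (h : n < N) :
    coeff n (ev a p) = coeff n (Polynomial.aeval a (trunc N p)) := by
  rw [coeff_aeval ha, ev, coeff_mk]
  refine sum_congr rfl fun k hk => ?_
  rw [mem_range] at hk
  rw [coeff_trunc, if_pos (by omega)]

theorem ev_mul {a : PowerSeries ℚ} (ha : constantCoeff a = 0) (p q : PowerSeries ℚ) :
    ev a (p * q) = ev a p * ev a q := by
  ext n
  have e2 : coeff n (ev a p * ev a q)
      = coeff n (Polynomial.aeval a (trunc (n+1) p * trunc (n+1) q)) := by
    rw [show (Polynomial.aeval a) (trunc (n+1) p * trunc (n+1) q)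
        = (Polynomial.aeval a) ((trunc (n+1) p : Polynomial ℚ)) * (Polynomial.aeval a) (trunc (n+1) q)
      from map_mul _ _ _, PowerSeries.coeff_mul, PowerSeries.coeff_mul]
    refine sum_congr rfl fun x hx => ?_
    rw [Finset.HasAntidiagonal.mem_antidiagonal] at hx
    rw [coeff_ev ha p (show x.1 < n+1 by omega), coeff_ev ha q (show x.2 < n+1 by omega)]
  rw [e2, coeff_aeval ha, ev, coeff_mk]
  refine sum_congr rfl fun k hk => ?_
  rw [mem_range] at hk
  congr 1
  rw [Polynomial.coeff_mul, PowerSeries.coeff_mul]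
  refine (sum_congr rfl fun x hx => ?_).symm
  rw [Finset.HasAntidiagonal.mem_antidiagonal] at hx
  rw [coeff_trunc, coeff_trunc, if_pos (by omega), if_pos (by omega)]

theorem ev_one (a : PowerSeries ℚ) : ev a 1 = 1 := by
  ext n
  rw [ev, coeff_mk]
  have : ∀ k ∈ range (n+1), coeff k (1 : PowerSeries ℚ) * coeff n (a ^ k)
      = if k = 0 then coeff n (1 : PowerSeries ℚ) else 0 := by
    intro k _
    rcases eq_or_ne k 0 with rfl | hk
    · simp
    · rw [if_neg hk, PowerSeries.coeff_one, if_neg hk, zero_mul]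
  rw [sum_congr rfl this, sum_ite_eq' (range (n+1)) 0]
  rw [if_pos (mem_range.mpr (Nat.succ_pos n))]

theorem ev_add (a p q : PowerSeries ℚ) : ev a (p + q) = ev a p + ev a q := by
  ext n
  simp only [ev, coeff_mk, map_add, add_mul, sum_add_distrib]

/-- `ev` as a ring homomorphism -/
noncomputable def evHom {a : PowerSeries ℚ} (ha : constantCoeff a = 0) :
    PowerSeries ℚ →+* PowerSeries ℚ where
  toFun := ev a
  map_one' := ev_one a
  map_mul' := ev_mul ha
  map_zero' := by ext n; simp [ev]
  map_add' := ev_add a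

theorem ev_X {a : PowerSeries ℚ} (ha : constantCoeff a = 0) : ev a X = a := by
  ext n
  rw [ev, coeff_mk]
  have : ∀ k ∈ range (n+1), coeff k (X : PowerSeries ℚ) * coeff n (a ^ k)
      = if k = 1 then coeff n (a^1) else 0 := by
    intro k _
    rcases eq_or_ne k 1 with rfl | hk
    · simp
    · rw [if_neg hk, PowerSeries.coeff_X, if_neg hk, zero_mul]
  rw [sum_congr rfl this, sum_ite_eq' (range (n+1)) 1]
  rcases Nat.eq_zero_or_pos n with rfl | hn
  · rw [if_neg (by simp)]
    rw [coeff_zero_eq_constantCoeff, ha]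
  · rw [if_pos (mem_range.mpr (by omega)), pow_one]

theorem ev_C {a : PowerSeries ℚ} (c : ℚ) : ev a (C c) = C c := by
  ext n
  rw [ev, coeff_mk]
  have : ∀ k ∈ range (n+1), coeff k (C c) * coeff n (a ^ k)
      = if k = 0 then c * coeff n (1 : PowerSeries ℚ) else 0 := by
    intro k _
    rcases eq_or_ne k 0 with rfl | hk
    · simp
    · rw [if_neg hk, PowerSeries.coeff_C, if_neg hk, zero_mul]
  rw [sum_congr rfl this, sum_ite_eq' (range (n+1)) 0, if_pos (mem_range.mpr (Nat.succ_pos n))]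
  rw [← PowerSeries.coeff_C_mul, mul_one]



abbrev K : Type := LaurentSeries ℚ
abbrev KQ : Type := PowerSeries K

abbrev Ψ : PowerSeries ℚ →+* K := HahnSeries.ofPowerSeries ℤ ℚ
abbrev jm : PowerSeries ℚ →+* KQ := PowerSeries.map (HahnSeries.C : ℚ →+* K)
abbrev Cq : K →+* KQ := PowerSeries.C
abbrev Θ : PowerSeries (PowerSeries ℚ) →+* KQ := PowerSeries.map Ψ

def xinv : K := HahnSeries.single (-1) 1

theorem psi_coeff (p : PowerSeries ℚ) (n : ℕ) : (Ψ p).coeff (n : ℤ) = coeff n p :=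
  HahnSeries.ofPowerSeries_apply_coeff p n

theorem xinv_pow (n : ℕ) : xinv ^ n = HahnSeries.single (-(n:ℤ)) 1 := by
  rw [xinv, HahnSeries.single_pow, one_pow]
  congr 1
  simp [nsmul_eq_mul]

theorem psiX_mul_xinv : Ψ X * xinv = 1 := by
  rw [Ψ, HahnSeries.ofPowerSeries_X, xinv, HahnSeries.single_mul_single, one_mul]
  norm_num

theorem ct_psi_mul_xinv_pow (p : PowerSeries ℚ) (n : ℕ) :
    (Ψ p * xinv ^ n).coeff 0 = coeff n p := by
  rw [xinv_pow]
  have := HahnSeries.coeff_mul_single_add (r := (1:ℚ)) (x := Ψ p) (a := (n:ℤ)) (b := -(n:ℤ))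
  rw [add_neg_cancel] at this
  rw [this, mul_one, psi_coeff]

/-- coefficient of a Hahn series as an additive hom -/
def hc (g : ℤ) : K →+ ℚ where
  toFun u := u.coeff g
  map_zero' := rfl
  map_add' _ _ := rfl

/-- constant-term extraction `KQ → ℚ⟦X⟧`, coefficientwise in `q`. -/
def Ct : KQ →+ PowerSeries ℚ where
  toFun u := PowerSeries.mk fun n => (coeff n u).coeff 0
  map_zero' := by ext n; simp
  map_add' u v := by ext n; simp [coeff_mk]

theorem Ct_apply (u : KQ) (n : ℕ) : coeff n (Ct u) = (coeff n u).coeff 0 := by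
  show coeff n (PowerSeries.mk fun k => (coeff k u).coeff 0) = _
  exact coeff_mk _ _

theorem hahn_C_mul_coeff (c : ℚ) (v : K) (g : ℤ) :
    (HahnSeries.C c * v).coeff g = c * v.coeff g := by
  rw [HahnSeries.C_apply, HahnSeries.coeff_single_zero_mul]

/-- semilinearity of `Ct` over `jm` -/
theorem Ct_jm_mul (s : PowerSeries ℚ) (u : KQ) : Ct (jm s * u) = s * Ct u := by
  ext n
  rw [Ct_apply, PowerSeries.coeff_mul, PowerSeries.coeff_mul,
    show (∑ p ∈ antidiagonal n, coeff p.1 (jm s) * coeff p.2 u).coeff 0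
      = ∑ p ∈ antidiagonal n, ((coeff p.1 (jm s)) * coeff p.2 u).coeff 0
      from map_sum (hc 0) _ _]
  refine sum_congr rfl fun x _ => ?_
  rw [Ct_apply]
  show ((coeff x.1 (jm s) * coeff x.2 u)).coeff 0 = coeff x.1 s * (coeff x.2 u).coeff 0
  rw [jm, PowerSeries.coeff_map, hahn_C_mul_coeff]

theorem Ct_theta (w : PowerSeries (PowerSeries ℚ)) :
    Ct (Θ w) = PowerSeries.map (constantCoeff) w := by
  ext n
  rw [Ct_apply, PowerSeries.coeff_map, PowerSeries.coeff_map]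
  have h := psi_coeff (coeff n w) 0
  rw [Nat.cast_zero] at h
  rw [h, coeff_zero_eq_constantCoeff]

theorem Ct_Cq_psi (p : PowerSeries ℚ) : Ct (Cq (Ψ p)) = C (constantCoeff p) := by
  ext n
  rw [Ct_apply, Cq, PowerSeries.coeff_C, PowerSeries.coeff_C]
  rcases eq_or_ne n 0 with rfl | hn
  · rw [if_pos rfl, if_pos rfl]
    have := psi_coeff p 0
    rw [Nat.cast_zero] at this
    rw [this, coeff_zero_eq_constantCoeff]
  · rw [if_neg hn, if_neg hn]; rfl


/-- shift (divide by X) -/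
def shiftf (p : PowerSeries ℚ) : PowerSeries ℚ := PowerSeries.mk fun k => coeff (k+1) p

theorem coeff_shiftf (p : PowerSeries ℚ) (k : ℕ) :
    coeff k (shiftf p) = coeff (k+1) p := coeff_mk _ _

theorem shiftf_decomp (p : PowerSeries ℚ) :
    p = C (constantCoeff p) + X * shiftf p := by
  ext n
  cases n with
  | zero =>
    simp only [map_add, coeff_zero_eq_constantCoeff_apply, map_mul, constantCoeff_X, zero_mul,
      add_zero, constantCoeff_C]
  | succ k =>
    rw [map_add, PowerSeries.coeff_C, if_neg (Nat.succ_ne_zero k), coeff_succ_X_mul,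
      coeff_shiftf, zero_add]

theorem shiftf_X_mul (y : PowerSeries ℚ) : shiftf (X * y) = y := by
  ext k
  rw [coeff_shiftf, coeff_succ_X_mul]


section Engine

theorem engine (Au ph : (PowerSeries ℚ)ˣ) (w₃ m₂ aq bq ρ : PowerSeries ℚ)
    (ha0 : constantCoeff aq = 0) (hb0 : constantCoeff bq = 1)
    (hph : (↑ph : PowerSeries ℚ) * (X * w₃) = X * m₂)
    (hsum : aq + bq = 1)
    (hprod : (1 + X) * (aq * bq) = -(2 * X))
    (hm1 : X * w₃ = X - X^2)
    (hm2 : m₂ = X^2 - X - 2)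
    (hρ : ρ * ((1 + X) * (bq - aq)) = 1) :
    (PowerSeries.mk fun n => coeff n (↑(Au * ph ^ n) : PowerSeries ℚ))
      = ρ * ev aq ((↑Au : PowerSeries ℚ) * w₃) := by
  classical
  set s : KQ := Cq (Ψ X) with hs
  set m : PowerSeries ℚ := X * ((↑Au : PowerSeries ℚ) * w₃) with hmdef
  -- constant coefficients
  have hccjm : ∀ r : PowerSeries ℚ, constantCoeff (jm r) = HahnSeries.C (constantCoeff r) := by
    intro r
    rw [← coeff_zero_eq_constantCoeff_apply, jm, PowerSeries.coeff_map,
      coeff_zero_eq_constantCoeff_apply]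
  -- units
  have hsa : IsUnit (s - jm aq) := by
    rw [PowerSeries.isUnit_iff_constantCoeff, map_sub, hccjm, ha0, map_zero, sub_zero, hs]
    rw [Cq, PowerSeries.constantCoeff_C]
    refine isUnit_iff_ne_zero.mpr ?_
    rw [Ψ, HahnSeries.ofPowerSeries_X]
    exact HahnSeries.single_ne_zero one_ne_zero
  have hsb : IsUnit (s - jm bq) := by
    rw [PowerSeries.isUnit_iff_constantCoeff, map_sub, hccjm, hb0, hs, Cq,
      PowerSeries.constantCoeff_C]
    refine isUnit_iff_ne_zero.mpr fun h => ?_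
    have h1 := congrArg (fun u : K => u.coeff 1) h
    simp only [HahnSeries.coeff_sub, Ψ, HahnSeries.ofPowerSeries_X] at h1
    rw [HahnSeries.coeff_single_same, HahnSeries.C_apply,
      HahnSeries.coeff_single_of_ne one_ne_zero] at h1
    simp at h1
  have hub : IsUnit (1 + (X : KQ)) := by
    rw [PowerSeries.isUnit_iff_constantCoeff, map_add, map_one, constantCoeff_X, add_zero]
    exact isUnit_one
  -- inverses
  set Ea : KQ := ↑hsa.unit⁻¹ with hEadef
  have hEa : (s - jm aq) * Ea = 1 := hsa.mul_val_inv
  set β : PowerSeries (PowerSeries ℚ) :=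
    PowerSeries.C X - PowerSeries.map (C) bq with hβdef
  have hβu : IsUnit β := by
    rw [PowerSeries.isUnit_iff_constantCoeff, hβdef, map_sub, PowerSeries.constantCoeff_C]
    have : constantCoeff (PowerSeries.map (C) bq) = C (constantCoeff bq) := by
      rw [← coeff_zero_eq_constantCoeff_apply, PowerSeries.coeff_map,
        coeff_zero_eq_constantCoeff_apply]
    rw [this, hb0, PowerSeries.isUnit_iff_constantCoeff, map_sub, constantCoeff_X,
      PowerSeries.constantCoeff_C]
    rw [zero_sub]
    exact isUnit_one.neg
  set Eb : KQ := Θ ↑hβu.unit⁻¹ with hEbdef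
  have hcomp : (Ψ.comp (C)) = (HahnSeries.C : ℚ →+* K) :=
    RingHom.ext fun c => HahnSeries.ofPowerSeries_C c
  have hΘβ : Θ β = s - jm bq := by
    rw [hβdef, map_sub, Θ, PowerSeries.map_C]
    have h2 : (PowerSeries.map Ψ) ((PowerSeries.map (C)) bq) = jm bq := by
      rw [← RingHom.comp_apply, ← PowerSeries.map_comp, hcomp, jm]
    rw [h2, hs, Cq]
  have hEb : (s - jm bq) * Eb = 1 := by
    rw [← hΘβ, hEbdef, ← map_mul, hβu.mul_val_inv]
    exact map_one Θ
  -- the generating series F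
  set F : KQ := PowerSeries.mk
    (fun n => Ψ ((↑(Au * ph ^ n) : PowerSeries ℚ)) * xinv ^ n) with hF
  -- master identity
  have hmaster : F * (Cq (Ψ (X * w₃)) - Cq (Ψ m₂) * X) = Cq (Ψ m) := by
    ext n : 1
    rw [mul_sub, map_sub, ← mul_assoc]
    rw [PowerSeries.coeff_mul_C]
    cases n with
    | zero =>
      rw [PowerSeries.coeff_zero_mul_X, sub_zero, hF, coeff_mk, PowerSeries.coeff_C,
        if_pos rfl]
      have hAu : Au * ph ^ 0 = Au := by rw [pow_zero, mul_one]
      rw [hAu, pow_zero, mul_one, ← map_mul]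
      congr 1
      rw [hmdef]
      ring
    | succ k =>
      rw [PowerSeries.coeff_succ_mul_X, PowerSeries.coeff_mul_C, hF, coeff_mk, coeff_mk]
      rw [PowerSeries.coeff_C, if_neg (Nat.succ_ne_zero k)]
      have key : (↑(Au * ph ^ (k+1)) : PowerSeries ℚ) * (X * w₃)
          = ((↑(Au * ph ^ k) : PowerSeries ℚ) * m₂) * X := by
        have h1 : Au * ph ^ (k+1) = (Au * ph ^ k) * ph := by rw [pow_succ, mul_assoc]
        rw [h1, Units.val_mul, mul_assoc, hph]
        ring
      have hx : Ψ X * xinv ^ (k+1) = xinv ^ k := by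
        rw [pow_succ, show Ψ X * (xinv ^ k * xinv) = (Ψ X * xinv) * xinv ^ k by ring,
          psiX_mul_xinv, one_mul]
      have e3 : Ψ (↑(Au * ph ^ (k+1)) : PowerSeries ℚ) * Ψ (X * w₃)
          = Ψ ((↑(Au * ph ^ k) : PowerSeries ℚ) * m₂) * Ψ X := by
        rw [← map_mul, ← map_mul, key]
      calc Ψ (↑(Au * ph ^ (k+1)) : PowerSeries ℚ) * xinv ^ (k+1) * Ψ (X * w₃)
            - Ψ (↑(Au * ph ^ k) : PowerSeries ℚ) * xinv ^ k * Ψ m₂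
          = (Ψ (↑(Au * ph ^ (k+1)) : PowerSeries ℚ) * Ψ (X * w₃)) * xinv ^ (k+1)
            - Ψ (↑(Au * ph ^ k) : PowerSeries ℚ) * xinv ^ k * Ψ m₂ := by ring
        _ = (Ψ ((↑(Au * ph ^ k) : PowerSeries ℚ) * m₂) * Ψ X) * xinv ^ (k+1)
            - Ψ (↑(Au * ph ^ k) : PowerSeries ℚ) * xinv ^ k * Ψ m₂ := by rw [e3]
        _ = Ψ ((↑(Au * ph ^ k) : PowerSeries ℚ) * m₂) * (Ψ X * xinv ^ (k+1))
            - Ψ (↑(Au * ph ^ k) : PowerSeries ℚ) * xinv ^ k * Ψ m₂ := by ring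
        _ = 0 := by rw [hx, map_mul]; ring
  -- kernel factorization
  have hker : Cq (Ψ (X * w₃)) - Cq (Ψ m₂) * X
      = -((1 + (X:KQ)) * ((s - jm aq) * (s - jm bq))) := by
    have h1 : jm aq + jm bq = 1 := by rw [← map_add, hsum, map_one]
    have h2 : (1 + (X:KQ)) * (jm aq * jm bq) = -(2 * X) := by
      have h3 := congrArg jm hprod
      simp only [map_mul, map_add, map_one, map_neg, map_ofNat, PowerSeries.map_X] at h3
      exact h3
    have e1 : Cq (Ψ (X * w₃)) = s - s^2 := by
      simp only [hm1, map_sub, map_pow, hs]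
    have e2 : Cq (Ψ m₂) = s^2 - s - 2 := by
      simp only [hm2, map_sub, map_pow, map_ofNat, hs]
    rw [e1, e2]
    linear_combination (-((1+(X:KQ)) * s)) * h1 + h2
  -- the kernel as a unit, and identification of F by partial fractions
  set κ : KQ := -((1 + (X:KQ)) * ((s - jm aq) * (s - jm bq))) with hκ
  have hκu : IsUnit κ := (hub.mul (hsa.mul hsb)).neg
  have hFeq : F = Cq (Ψ m) * jm ρ * (Ea - Eb) := by
    apply hκu.mul_left_cancel
    have hL : κ * F = Cq (Ψ m) := by rw [mul_comm, ← hker]; exact hmaster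
    rw [hL]
    have hkEa : κ * Ea = -((1 + (X:KQ)) * (s - jm bq)) := by
      rw [hκ, show -((1 + (X:KQ)) * ((s - jm aq) * (s - jm bq))) * Ea
        = -((1 + (X:KQ)) * (s - jm bq)) * ((s - jm aq) * Ea) by ring, hEa, mul_one]
    have hkEb : κ * Eb = -((1 + (X:KQ)) * (s - jm aq)) := by
      rw [hκ, show -((1 + (X:KQ)) * ((s - jm aq) * (s - jm bq))) * Eb
        = -((1 + (X:KQ)) * (s - jm aq)) * ((s - jm bq) * Eb) by ring, hEb, mul_one]
    have hkdiff : κ * (Ea - Eb) = jm ((1 + X) * (bq - aq)) := by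
      rw [mul_sub, hkEa, hkEb, map_mul, map_sub, map_add, map_one, PowerSeries.map_X]
      ring
    calc Cq (Ψ m) = Cq (Ψ m) * jm (ρ * ((1 + X) * (bq - aq))) := by rw [hρ, map_one, mul_one]
      _ = Cq (Ψ m) * (jm ρ * jm ((1 + X) * (bq - aq))) := by
          rw [map_mul jm ρ ((1 + X) * (bq - aq))]
      _ = Cq (Ψ m) * (jm ρ * (κ * (Ea - Eb))) := by rw [hkdiff]
      _ = κ * (Cq (Ψ m) * jm ρ * (Ea - Eb)) := by ring
  -- Ct of the Eb part vanishes
  have hCtEb : Ct (Cq (Ψ m) * Eb) = 0 := by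
    have h1 : Cq (Ψ m) = Θ (PowerSeries.C m) := (PowerSeries.map_C Ψ m).symm
    rw [h1, hEbdef, ← map_mul, Ct_theta, map_mul, PowerSeries.map_C]
    have hm0 : constantCoeff m = 0 := by rw [hmdef, map_mul, constantCoeff_X, zero_mul]
    rw [hm0, map_zero, zero_mul]
  -- basic relation for Ea
  have hrel : Cq (Ψ X) * Ea = 1 + jm aq * Ea := by
    rw [← hs]
    linear_combination hEa
  -- the Ea part has purely negative supports
  have hEasupp : ∀ n : ℕ, ∀ g : ℤ, 0 ≤ g → (coeff n Ea).coeff g = 0 := by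
    intro n
    induction n using Nat.strong_induction_on with
    | _ n ih =>
      intro g hg
      have hcoeff := congrArg (fun u : KQ => ((coeff n u).coeff (g+1))) hrel
      simp only [map_add] at hcoeff
      rw [PowerSeries.coeff_C_mul, HahnSeries.coeff_add] at hcoeff
      have hL : (Ψ X * coeff n Ea).coeff (g + 1) = (coeff n Ea).coeff g := by
        rw [show (Ψ X : K) = HahnSeries.single (1:ℤ) (1:ℚ) from HahnSeries.ofPowerSeries_X,
          HahnSeries.coeff_single_mul_add, one_mul]
      have hone : ((coeff n) (1 : KQ)).coeff (g+1) = 0 := by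
        rw [PowerSeries.coeff_one]
        split_ifs
        · rw [HahnSeries.coeff_one, if_neg (by omega)]
        · rfl
      have hmul : ((coeff n) (jm aq * Ea)).coeff (g+1) = 0 := by
        rw [PowerSeries.coeff_mul,
          show (∑ p ∈ antidiagonal n, coeff p.1 (jm aq) * coeff p.2 Ea).coeff (g+1)
            = ∑ p ∈ antidiagonal n, ((coeff p.1 (jm aq)) * coeff p.2 Ea).coeff (g+1)
            from map_sum (hc (g+1)) _ _]
        refine Finset.sum_eq_zero fun x hx => ?_
        rw [Finset.HasAntidiagonal.mem_antidiagonal] at hx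
        show ((coeff x.1 (jm aq)) * coeff x.2 Ea).coeff (g+1) = 0
        rw [PowerSeries.coeff_map, hahn_C_mul_coeff]
        rcases Nat.eq_zero_or_pos x.1 with h0 | hpos
        · rw [h0, coeff_zero_eq_constantCoeff_apply, ha0, zero_mul]
        · rw [ih x.2 (by omega) (g+1) (by omega), mul_zero]
      rw [hL, hone, hmul, add_zero] at hcoeff
      exact hcoeff
  have hCtEa0 : Ct Ea = 0 := by
    ext n
    rw [Ct_apply, hEasupp n 0 le_rfl, map_zero]
  -- recursion for the Ea-part "T" functional
  have hCC : ∀ c : ℚ, Cq (Ψ (C c)) = jm (C c) := by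
    intro c
    rw [HahnSeries.ofPowerSeries_C, PowerSeries.map_C]
  have hTrec : ∀ p : PowerSeries ℚ, Ct (Cq (Ψ p) * Ea)
      = C (constantCoeff (shiftf p)) + aq * Ct (Cq (Ψ (shiftf p)) * Ea) := by
    intro p
    have hdec2 : Cq (Ψ p) * Ea
        = jm (C (constantCoeff p)) * Ea + (Cq (Ψ (shiftf p))
          + jm aq * (Cq (Ψ (shiftf p)) * Ea)) := by
      conv_lhs => rw [shiftf_decomp p]
      rw [map_add, map_add, map_mul, map_mul, hCC]
      calc (jm (C (constantCoeff p)) + Cq (Ψ X) * Cq (Ψ (shiftf p))) * Ea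
          = jm (C (constantCoeff p)) * Ea + Cq (Ψ (shiftf p)) * (Cq (Ψ X) * Ea) := by ring
        _ = jm (C (constantCoeff p)) * Ea
            + Cq (Ψ (shiftf p)) * (1 + jm aq * Ea) := by rw [hrel]
        _ = _ := by ring
    rw [hdec2, map_add Ct, map_add Ct, Ct_jm_mul, Ct_jm_mul, hCtEa0, mul_zero, zero_add,
      Ct_Cq_psi]
  -- recursion for ev
  have hevrec : ∀ p : PowerSeries ℚ,
      ev aq p = C (constantCoeff p) + aq * ev aq (shiftf p) := by
    intro p
    conv_lhs => rw [shiftf_decomp p]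
    rw [ev_add, ev_mul ha0, ev_C, ev_X ha0]
  -- T = ev ∘ shift
  have main : ∀ n : ℕ, ∀ p : PowerSeries ℚ,
      coeff n (Ct (Cq (Ψ p) * Ea) - ev aq (shiftf p)) = 0 := by
    intro n
    induction n using Nat.strong_induction_on with
    | _ n ih =>
      intro p
      have hΔ : Ct (Cq (Ψ p) * Ea) - ev aq (shiftf p)
          = aq * (Ct (Cq (Ψ (shiftf p)) * Ea) - ev aq (shiftf (shiftf p))) := by
        rw [hTrec p, hevrec (shiftf p)]
        ring
      rw [hΔ, PowerSeries.coeff_mul]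
      refine Finset.sum_eq_zero fun x hx => ?_
      rw [Finset.HasAntidiagonal.mem_antidiagonal] at hx
      rcases Nat.eq_zero_or_pos x.1 with h0 | hpos
      · rw [h0, coeff_zero_eq_constantCoeff_apply, ha0, zero_mul]
      · rw [ih x.2 (by omega) (shiftf p), mul_zero]
  have hTm : Ct (Cq (Ψ m) * Ea) = ev aq ((↑Au : PowerSeries ℚ) * w₃) := by
    have hsm : shiftf m = (↑Au : PowerSeries ℚ) * w₃ := by
      rw [hmdef, shiftf_X_mul]
    ext n
    have h := main n m
    rw [map_sub, sub_eq_zero, hsm] at h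
    exact h
  -- final assembly
  have hmkCt : (PowerSeries.mk fun n => coeff n (↑(Au * ph ^ n) : PowerSeries ℚ)) = Ct F := by
    ext n
    rw [coeff_mk, Ct_apply, hF, coeff_mk, ct_psi_mul_xinv_pow]
  rw [hmkCt, hFeq]
  rw [show Cq (Ψ m) * jm ρ * (Ea - Eb)
    = jm ρ * (Cq (Ψ m) * Ea) - jm ρ * (Cq (Ψ m) * Eb) by ring]
  rw [map_sub Ct, Ct_jm_mul, Ct_jm_mul, hCtEb, mul_zero, sub_zero, hTm]

end Engine

section Aux

theorem unit_split {G : Type*} [CommGroup G] (x y z t : G) (m k : ℤ) :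
    x^(m+1-2*k) * y^(m-k) * z^(-(m+k)) * t^k
      = (x^(1-2*k) * y^(-k) * z^(-k) * t^k) * (x*y*z⁻¹)^m := by
  apply Additive.ofMul.injective
  simp only [ofMul_mul, ofMul_zpow, ofMul_inv]
  module

theorem unit_merge {G : Type*} [CommGroup G] (x y z t : G) (k : ℤ) :
    (x^(1-2*k) * y^(-k) * z^(-k) * t^k) * z = x^(1-2*k) * y^(-k) * z^(1-k) * t^k := by
  apply Additive.ofMul.injective
  simp only [ofMul_mul, ofMul_zpow, ofMul_inv]
  module

theorem vw_group {G : Type*} [CommGroup G] (A B Cc D v w P ν τ : G) (k : ℤ)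
    (h1 : A*B*v = ν*τ) (h2 : A*Cc = ν*(w*D)) (h3 : v*D = P) (hν : ν*ν = 1) :
    P⁻¹ * (A^(1-2*k) * B^(-k) * Cc^(1-k) * D^k) = ν * τ^(-k) * v^(k-1) * w^(1-k) := by
  have e1 : B^(-k) = (A*B*v)^(-k) * (A*v)^k := by
    apply Additive.ofMul.injective
    simp only [ofMul_mul, ofMul_zpow, ofMul_inv]; module
  have e2 : Cc^(1-k) = (A*Cc)^(1-k) * A^(k-1) := by
    apply Additive.ofMul.injective
    simp only [ofMul_mul, ofMul_zpow, ofMul_inv]; module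
  have hν' : ν^(1-2*k) = ν := by
    have h : ν^(1-2*k) = ν^(1:ℤ) * (ν*ν)^(-k) := by
      apply Additive.ofMul.injective
      simp only [ofMul_mul, ofMul_zpow, ofMul_inv]; module
    rw [h, hν, one_zpow, zpow_one, mul_one]
  have main : (v*D)⁻¹ * (A^(1-2*k) * ((A*B*v)^(-k) * (A*v)^k) * ((A*Cc)^(1-k) * A^(k-1)) * D^k)
      = (A*B*v)^(-k) * (A*Cc)^(1-k) * v^(k-1) * D^(k-1) := by
    apply Additive.ofMul.injective
    simp only [ofMul_mul, ofMul_zpow, ofMul_inv]; module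
  rw [e1, e2, ← h3, main, h1, h2]
  calc (ν*τ)^(-k) * (ν*(w*D))^(1-k) * v^(k-1) * D^(k-1)
      = ν^(1-2*k) * τ^(-k) * v^(k-1) * w^(1-k) := by
        apply Additive.ofMul.injective
        simp only [ofMul_mul, ofMul_zpow, ofMul_inv]; module
    _ = ν * τ^(-k) * v^(k-1) * w^(1-k) := by rw [hν']

end Aux

end
end VW

open VW

/-- Unsigned generating function identity.  `f n` is the coefficient
of `x^n` in `(x−2)^{n+1−2g} (1+x)^{n−g} (1−x)^{−(n+g)} (1−2x)^g`.  If `σ ∈ ℚ[[q]]`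
has constant coefficient `1` and `(1+q)σ² = 1+9q`, then
`∑ f n q^n = −2^{−g} (1+q)^{g−1} (1 + (1+3q)((1+q)σ)⁻¹)^{1−g}`. -/
theorem vafaWitten_generating_function_unsigned
    (g : ℕ) (hg : 1 ≤ g)
    (u₁ u₂ u₃ u₄ : (PowerSeries ℚ)ˣ)
    (hu₁ : (u₁ : PowerSeries ℚ) = X - 2)
    (hu₂ : (u₂ : PowerSeries ℚ) = 1 + X)
    (hu₃ : (u₃ : PowerSeries ℚ) = 1 - X)
    (hu₄ : (u₄ : PowerSeries ℚ) = 1 - 2 * X)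
    (f : ℕ → ℚ)
    (hf : ∀ n : ℕ, f n =
      coeff n
        ((u₁ ^ ((n : ℤ) + 1 - 2 * (g : ℤ)) * u₂ ^ ((n : ℤ) - (g : ℤ)) *
          u₃ ^ (-((n : ℤ) + (g : ℤ))) * u₄ ^ (g : ℤ) : (PowerSeries ℚ)ˣ) : PowerSeries ℚ))
    (σ : PowerSeries ℚ)
    (hσ0 : constantCoeff σ = 1)
    (hσsq : (1 + X) * σ ^ 2 = 1 + 9 * X)
    (P : (PowerSeries ℚ)ˣ) (hP : (P : PowerSeries ℚ) = (1 + X) * σ)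
    (v : (PowerSeries ℚ)ˣ) (hv : (v : PowerSeries ℚ) = 1 + X)
    (w : (PowerSeries ℚ)ˣ)
    (hw : (w : PowerSeries ℚ) =
      1 + (1 + 3 * X) * ((P⁻¹ : (PowerSeries ℚ)ˣ) : PowerSeries ℚ))
    (hw0 : constantCoeff (w : PowerSeries ℚ) = 2) :
    PowerSeries.mk (fun n => f n) =
      C (-(2 : ℚ) ^ (-(g : ℤ))) *
        ((v ^ ((g : ℤ) - 1) * w ^ (1 - (g : ℤ)) : (PowerSeries ℚ)ˣ) : PowerSeries ℚ) := by
  classical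
  set k : ℤ := (g : ℤ) with hk
  -- the two roots
  set aq : PowerSeries ℚ := C (1/2) * (1 - σ) with haq
  set bq : PowerSeries ℚ := C (1/2) * (1 + σ) with hbq
  have hhalf : (2 : PowerSeries ℚ) * C (1/2) = 1 := by
    rw [show (2 : PowerSeries ℚ) = C 2 from (map_ofNat (C) 2).symm, ← map_mul]
    norm_num
  have h2a : 2 * aq = 1 - σ := by
    rw [haq, show (2 : PowerSeries ℚ) * (C (1/2) * (1 - σ))
      = ((2 : PowerSeries ℚ) * C (1/2)) * (1 - σ) by ring, hhalf, one_mul]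
  have ha0 : constantCoeff aq = 0 := by
    rw [haq, map_mul, map_sub, map_one, hσ0, constantCoeff_C]
    ring
  have hb0 : constantCoeff bq = 1 := by
    rw [hbq, map_mul, map_add, map_one, hσ0, constantCoeff_C]
    norm_num
  have hsum : aq + bq = 1 := by
    rw [haq, hbq]
    linear_combination hhalf
  have hprod : (1 + X) * (aq * bq) = -(2 * X) := by
    rw [haq, hbq]
    linear_combination (-(2*X)*((2*(C (1/2) : PowerSeries ℚ))+1)) * hhalf
      + (-((C (1/2) : PowerSeries ℚ) * C (1/2))) * hσsq
  have hdiff : bq - aq = σ := by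
    rw [haq, hbq]
    linear_combination σ * hhalf
  -- units on the x side
  set Aunit : (PowerSeries ℚ)ˣ :=
    u₁ ^ ((1:ℤ) - 2*k) * u₂ ^ (-k) * u₃ ^ (-k) * u₄ ^ k with hAunit
  set phiu : (PowerSeries ℚ)ˣ := u₁ * u₂ * u₃⁻¹ with hphiu
  have hph : (↑phiu : PowerSeries ℚ) * (X * (↑u₃ : PowerSeries ℚ)) = X * (↑(u₁ * u₂) : PowerSeries ℚ) := by
    rw [hphiu, Units.val_mul, Units.val_mul]
    linear_combination (X * (↑u₁ : PowerSeries ℚ) * ↑u₂) * u₃.inv_mul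
  have hm1 : X * (↑u₃ : PowerSeries ℚ) = X - X^2 := by rw [hu₃]; ring
  have hm2 : (↑(u₁ * u₂) : PowerSeries ℚ) = X^2 - X - 2 := by
    rw [Units.val_mul, hu₁, hu₂]; ring
  have hPinv : ((P⁻¹ : (PowerSeries ℚ)ˣ) : PowerSeries ℚ) * ↑P = 1 := by
    rw [← Units.val_mul]
    norm_num
  have hρ : ((P⁻¹ : (PowerSeries ℚ)ˣ) : PowerSeries ℚ) * ((1 + X) * (bq - aq)) = 1 := by
    rw [hdiff, ← hP, hPinv]
  -- apply the engine
  have heng := engine Aunit phiu (↑u₃) (↑(u₁ * u₂)) aq bq (↑P⁻¹)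
    ha0 hb0 hph hsum hprod hm1 hm2 hρ
  have hmkf : PowerSeries.mk (fun n => f n)
      = PowerSeries.mk (fun n => coeff n (↑(Aunit * phiu ^ n) : PowerSeries ℚ)) := by
    ext n
    rw [coeff_mk, coeff_mk, hf n]
    congr 2
    rw [hAunit, hphiu, ← zpow_natCast (u₁ * u₂ * u₃⁻¹) n]
    exact unit_split u₁ u₂ u₃ u₄ (n : ℤ) k
  rw [hmkf, heng]
  -- evaluation as a homomorphism on units
  set em : PowerSeries ℚ →+* PowerSeries ℚ := evHom ha0 with hem
  have hev_coe : ev aq ((↑Aunit : PowerSeries ℚ) * ↑u₃)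
      = (↑(Units.map em.toMonoidHom (Aunit * u₃)) : PowerSeries ℚ) := by
    rw [Units.coe_map]
    show ev aq ((↑Aunit : PowerSeries ℚ) * ↑u₃) = ev aq (↑(Aunit * u₃) : PowerSeries ℚ)
    rw [Units.val_mul Aunit u₃]
  set Ua := Units.map em.toMonoidHom u₁ with hUadef
  set Ub := Units.map em.toMonoidHom u₂ with hUbdef
  set Uc := Units.map em.toMonoidHom u₃ with hUcdef
  set Ud := Units.map em.toMonoidHom u₄ with hUddef
  have hUa : (↑Ua : PowerSeries ℚ) = aq - 2 := by
    rw [hUadef, Units.coe_map]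
    show em (↑u₁ : PowerSeries ℚ) = aq - 2
    rw [hu₁, map_sub, map_ofNat]
    congr 1
    exact ev_X ha0
  have hUb : (↑Ub : PowerSeries ℚ) = 1 + aq := by
    rw [hUbdef, Units.coe_map]
    show em (↑u₂ : PowerSeries ℚ) = 1 + aq
    rw [hu₂, map_add, map_one]
    congr 1
    exact ev_X ha0
  have hUc : (↑Uc : PowerSeries ℚ) = 1 - aq := by
    rw [hUcdef, Units.coe_map]
    show em (↑u₃ : PowerSeries ℚ) = 1 - aq
    rw [hu₃, map_sub, map_one]
    congr 1
    exact ev_X ha0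
  have hUd : (↑Ud : PowerSeries ℚ) = σ := by
    rw [hUddef, Units.coe_map]
    show em (↑u₄ : PowerSeries ℚ) = σ
    rw [hu₄, map_sub, map_one, map_mul, map_ofNat]
    have hX : em X = aq := ev_X ha0
    rw [hX]
    linear_combination -h2a
  set u2 : ℚˣ := ⟨2, 1/2, by norm_num, by norm_num⟩ with hu2
  set τ : (PowerSeries ℚ)ˣ := Units.map (C : ℚ →+* PowerSeries ℚ).toMonoidHom u2 with hτ
  have hτval : (↑τ : PowerSeries ℚ) = C 2 := by
    rw [hτ, Units.coe_map]
    rfl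
  have hfour : (4 : PowerSeries ℚ) ≠ 0 := fun h => by
    have h0 := congrArg (constantCoeff) h
    rw [map_ofNat, map_zero] at h0
    norm_num at h0
  have h4P : ((4 : PowerSeries ℚ) * ↑P) ≠ 0 := fun h => by
    have h0 := congrArg (constantCoeff) h
    rw [map_mul, map_zero, map_ofNat, hP, map_mul, map_add, map_one, constantCoeff_X,
      add_zero, one_mul, hσ0, mul_one] at h0
    norm_num at h0
  have hUr1 : Ua * Ub * v = (-1) * τ := by
    apply Units.ext
    rw [Units.val_mul, Units.val_mul, Units.val_mul, hUa, hUb, hv, hτval, Units.val_neg,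
      Units.val_one, show C 2 = (2 : PowerSeries ℚ) from map_ofNat _ 2]
    apply mul_left_cancel₀ hfour
    linear_combination ((2*aq-1-σ)*(1+X)) * h2a + hσsq
  have hwP : (↑w : PowerSeries ℚ) * (↑P : PowerSeries ℚ)
      = (↑P : PowerSeries ℚ) + (1+3*X) := by
    rw [hw]
    linear_combination (1+3*X) * hPinv
  have hUr2 : Ua * Uc = (-1) * (w * Ud) := by
    apply Units.ext
    rw [Units.val_mul, Units.val_mul, Units.val_mul, hUa, hUc, hUd, Units.val_neg,
      Units.val_one]
    apply mul_right_cancel₀ h4P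
    linear_combination (4*σ) * hwP + (4*(aq-2)*(1-aq) + 4*σ) * hP
      + ((σ - 2*aq + 5)*(1+X)*σ) * h2a + (-σ) * hσsq
  have hUr3 : v * Ud = P := by
    apply Units.ext
    rw [Units.val_mul, hv, hUd, hP]
  have hν : ((-1 : (PowerSeries ℚ)ˣ)) * (-1) = 1 := by simp
  have hfinal := vw_group Ua Ub Uc Ud v w P (-1) τ k hUr1 hUr2 hUr3 hν
  have hmap : Units.map em.toMonoidHom (Aunit * u₃) = Ua^(1-2*k) * Ub^(-k) * Uc^(1-k) * Ud^k := by
    have hAu3 : Aunit * u₃ = u₁^(1-2*k) * u₂^(-k) * u₃^(1-k) * u₄^k := by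
      rw [hAunit]
      exact unit_merge u₁ u₂ u₃ u₄ k
    rw [hAu3, map_mul, map_mul, map_mul, map_zpow, map_zpow, map_zpow, map_zpow]
  rw [hev_coe, hmap, ← Units.val_mul, hfinal, mul_assoc ((-1 : (PowerSeries ℚ)ˣ) * τ^(-k)),
    Units.val_mul]
  congr 1
  rw [Units.val_mul, Units.val_neg, Units.val_one]
  have h1 : τ^(-k) = Units.map (C : ℚ →+* PowerSeries ℚ).toMonoidHom (u2^(-k)) := by
    rw [hτ, map_zpow]
  rw [h1, Units.coe_map]
  show -1 * C (↑(u2^(-k)) : ℚ) = C (-(2:ℚ)^(-k))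
  rw [Units.val_zpow_eq_zpow_val]
  show -1 * C ((2:ℚ)^(-k)) = C (-(2:ℚ)^(-k))
  rw [map_neg, neg_one_mul]
end

section
/- Let g ≥ 1 be an integer. Let σ ∈ ℚ[[q]] be any formal power series with constant coefficient 1 satisfying (1+q)·σ² = 1+9q, and set x₀ := (1−σ)/2 and x₁ := (1+σ)/2 in ℚ[[q]]. Then in ℚ[[q]] one has (1−2x₀)^{g} · (x₀−2)^{1−2g} · (1+x₀)^{−g} · (1−x₀)^{1−g} · (−1) · ((1+q)·(x₀−x₁))^{−1} = −2^{−g} · (1+q)^{g−1} · (1 + (1+3q)·((1+q)σ)^{−1})^{1−g}, where 1−2x₀, x₀−2, 1+x₀, 1−x₀, (1+q)(x₀−x₁), (1+q)σ and 1 + (1+3q)·((1+q)σ)^{−1} are units of ℚ[[q]] (constant coefficients 1, −2, 1, 1, −1, 1, 2 respectively) and integer powers of units are taken in the group of units. -/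
open PowerSeries

private lemma vw_grp {G : Type*} [CommGroup G] (a b c d e u v w n : G) (g : ℤ)
    (h1 : e = n * (v * a)) (h2 : b * d = n * (w * a))
    (h3 : u * (a * w) = v * (b ^ 2 * (c * d))) :
    a ^ g * b ^ (1 - 2 * g) * c ^ (-g) * d ^ (1 - g) * n * e⁻¹
      = n * u ^ (-g) * (v ^ (g - 1) * w ^ (1 - g)) := by
  apply Additive.ofMul.injective
  have h1' := congrArg Additive.ofMul h1
  have h2' := congrArg Additive.ofMul h2
  have h3' := congrArg Additive.ofMul h3
  simp only [ofMul_mul, ofMul_pow, ofMul_zpow, ofMul_inv] at h1' h2' h3' ⊢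
  linear_combination (norm := module) -h1' + h2' + g • h3'

/-- Algebraic simplification of the residue. -/
theorem vafaWitten_residue_simplification
    (g : ℕ) (hg : 1 ≤ g)
    (σ : PowerSeries ℚ)
    (hσ0 : constantCoeff σ = 1)
    (hσsq : (1 + X) * σ ^ 2 = 1 + 9 * X)
    (x₀ x₁ : PowerSeries ℚ)
    (hx₀ : x₀ = (2 : ℚ)⁻¹ • (1 - σ))
    (hx₁ : x₁ = (2 : ℚ)⁻¹ • (1 + σ))
    (a b c d e : (PowerSeries ℚ)ˣ)
    (ha : (a : PowerSeries ℚ) = 1 - 2 * x₀)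
    (hb : (b : PowerSeries ℚ) = x₀ - 2)
    (hc : (c : PowerSeries ℚ) = 1 + x₀)
    (hd : (d : PowerSeries ℚ) = 1 - x₀)
    (he : (e : PowerSeries ℚ) = (1 + X) * (x₀ - x₁))
    (P : (PowerSeries ℚ)ˣ) (hP : (P : PowerSeries ℚ) = (1 + X) * σ)
    (v : (PowerSeries ℚ)ˣ) (hv : (v : PowerSeries ℚ) = 1 + X)
    (w : (PowerSeries ℚ)ˣ)
    (hw : (w : PowerSeries ℚ) =
      1 + (1 + 3 * X) * ((P⁻¹ : (PowerSeries ℚ)ˣ) : PowerSeries ℚ))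
    (hw0 : constantCoeff (w : PowerSeries ℚ) = 2) :
    ((a ^ (g : ℤ) * b ^ (1 - 2 * (g : ℤ)) * c ^ (-(g : ℤ)) * d ^ (1 - (g : ℤ)) :
        (PowerSeries ℚ)ˣ) : PowerSeries ℚ) *
      (-1) * ((e⁻¹ : (PowerSeries ℚ)ˣ) : PowerSeries ℚ) =
    C (-(2 : ℚ) ^ (-(g : ℤ))) *
      ((v ^ ((g : ℤ) - 1) * w ^ (1 - (g : ℤ)) : (PowerSeries ℚ)ˣ) : PowerSeries ℚ) := by
  have h2 : (2 : PowerSeries ℚ) * C 2⁻¹ = 1 := by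
    rw [← map_ofNat (C) 2, ← map_mul]
    norm_num
  have hPinv : (1 + X) * σ * (↑(P⁻¹) : PowerSeries ℚ) = 1 := by
    rw [← hP]; exact P.mul_inv
  have h4 : (4 : PowerSeries ℚ) ≠ 0 := by
    intro h
    have := congrArg (constantCoeff) h
    rw [map_ofNat, map_zero] at this
    norm_num at this
  have h16 : (16 : PowerSeries ℚ) ≠ 0 := by
    intro h
    have := congrArg (constantCoeff) h
    rw [map_ofNat, map_zero] at this
    norm_num at this
  set u : (PowerSeries ℚ)ˣ :=
    Units.map (C : ℚ →+* PowerSeries ℚ).toMonoidHom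
      (Units.mk0 (2 : ℚ) (by norm_num)) with hu
  have hu2 : (u : PowerSeries ℚ) = 2 := by
    rw [hu, Units.coe_map]
    simp only [RingHom.toMonoidHom_eq_coe, MonoidHom.coe_coe, Units.val_mk0]
    exact map_ofNat _ 2
  set n : (PowerSeries ℚ)ˣ := -1 with hn
  have hnv : (n : PowerSeries ℚ) = -1 := by simp [hn]
  have hx₀' : x₀ = C 2⁻¹ * (1 - σ) := by rw [hx₀, smul_eq_C_mul]
  have hx₁' : x₁ = C 2⁻¹ * (1 + σ) := by rw [hx₁, smul_eq_C_mul]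
  have hE : e = n * (v * a) := by
    refine Units.ext ?_
    simp only [Units.val_mul]
    rw [hnv, he, hv, ha, hx₀', hx₁']
    linear_combination ((-1 : PowerSeries ℚ) + (-1 : PowerSeries ℚ)*(X : PowerSeries ℚ)) * h2
  have hBD : b * d = n * (w * a) := by
    refine Units.ext ?_
    apply mul_left_cancel₀ h4
    simp only [Units.val_mul]
    rw [hnv, hb, hd, hw, ha, hx₀']
    linear_combination ((1 : PowerSeries ℚ) + (-4 : PowerSeries ℚ)*(↑(P⁻¹) : PowerSeries ℚ) + (-12 : PowerSeries ℚ)*(↑(P⁻¹) : PowerSeries ℚ)*(X : PowerSeries ℚ) + (4 : PowerSeries ℚ)*σ*(↑(P⁻¹) : PowerSeries ℚ) + (12 : PowerSeries ℚ)*σ*(↑(P⁻¹) : PowerSeries ℚ)*(X : PowerSeries ℚ) + (-1 : PowerSeries ℚ)*σ*σ + (-2 : PowerSeries ℚ)*(C 2⁻¹) + (4 : PowerSeries ℚ)*(C 2⁻¹)*σ + (-2 : PowerSeries ℚ)*(C 2⁻¹)*σ*σ) * h2 + ((-1 : PowerSeries ℚ)*σ*(↑(P⁻¹) : PowerSeries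 ℚ)) * hσsq + ((3 : PowerSeries ℚ) + (1 : PowerSeries ℚ)*σ*σ) * hPinv
  have hU : u * (a * w) = v * (b ^ 2 * (c * d)) := by
    refine Units.ext ?_
    apply mul_left_cancel₀ h16
    simp only [Units.val_mul, Units.val_pow_eq_pow_val]
    rw [hu2, hv, ha, hb, hc, hd, hw, hx₀']
    linear_combination ((5 : PowerSeries ℚ) + (37 : PowerSeries ℚ)*(X : PowerSeries ℚ) + (-32 : PowerSeries ℚ)*(↑(P⁻¹) : PowerSeries ℚ) + (-96 : PowerSeries ℚ)*(↑(P⁻¹) : PowerSeries ℚ)*(X : PowerSeries ℚ) + (-4 : PowerSeries ℚ)*σ + (-36 : PowerSeries ℚ)*σ*(X : PowerSeries ℚ) + (32 : PowerSeries ℚ)*σ*(↑(P⁻¹) : PowerSeries ℚ) + (96 : PowerSeries ℚ)*σ*(↑(P⁻¹) : PowerSeries ℚ)*(X : PowerSeries ℚ) + (-6 : PowerSeries ℚ)*σ*σ + (-6 : PowerSeries ℚ)*σ*σ*(X : PowerSeries ℚ) + (4 : PowerSeries ℚ)*σ*σ*σ + (4 : PowerSeries ℚ)*σ*σ*σ*(X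 : PowerSeries ℚ) + (1 : PowerSeries ℚ)*σ*σ*σ*σ + (1 : PowerSeries ℚ)*σ*σ*σ*σ*(X : PowerSeries ℚ) + (10 : PowerSeries ℚ)*(C 2⁻¹) + (10 : PowerSeries ℚ)*(C 2⁻¹)*(X : PowerSeries ℚ) + (-8 : PowerSeries ℚ)*(C 2⁻¹)*σ + (-8 : PowerSeries ℚ)*(C 2⁻¹)*σ*(X : PowerSeries ℚ) + (-12 : PowerSeries ℚ)*(C 2⁻¹)*σ*σ + (-12 : PowerSeries ℚ)*(C 2⁻¹)*σ*σ*(X : PowerSeries ℚ) + (8 : PowerSeries ℚ)*(C 2⁻¹)*σ*σ*σ + (8 : PowerSeries ℚ)*(C 2⁻¹)*σ*σ*σ*(X : PowerSeries ℚ) + (2 : PowerSeries ℚ)*(C 2⁻¹)*σ*σ*σ*σ + (2 : PowerSeries ℚ)*(C 2⁻¹)*σ*σ*σ*σ*(X : PowerSeries ℚ) + (-28 : PowerSeries ℚ)*(C 2⁻¹)*(C 2⁻¹) + (-28 : PowerSeries ℚ)*(C 2⁻¹)*(C 2⁻¹)*(X : PowerSeries ℚ) + (80 : PowerSeries ℚ)*(C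 2⁻¹)*(C 2⁻¹)*σ + (80 : PowerSeries ℚ)*(C 2⁻¹)*(C 2⁻¹)*σ*(X : PowerSeries ℚ) + (-72 : PowerSeries ℚ)*(C 2⁻¹)*(C 2⁻¹)*σ*σ + (-72 : PowerSeries ℚ)*(C 2⁻¹)*(C 2⁻¹)*σ*σ*(X : PowerSeries ℚ) + (16 : PowerSeries ℚ)*(C 2⁻¹)*(C 2⁻¹)*σ*σ*σ + (16 : PowerSeries ℚ)*(C 2⁻¹)*(C 2⁻¹)*σ*σ*σ*(X : PowerSeries ℚ) + (4 : PowerSeries ℚ)*(C 2⁻¹)*(C 2⁻¹)*σ*σ*σ*σ + (4 : PowerSeries ℚ)*(C 2⁻¹)*(C 2⁻¹)*σ*σ*σ*σ*(X : PowerSeries ℚ) + (8 : PowerSeries ℚ)*(C 2⁻¹)*(C 2⁻¹)*(C 2⁻¹) + (8 : PowerSeries ℚ)*(C 2⁻¹)*(C 2⁻¹)*(C 2⁻¹)*(X : PowerSeries ℚ) + (-32 : PowerSeries ℚ)*(C 2⁻¹)*(C 2⁻¹)*(C 2⁻¹)*σ + (-32 : PowerSeries ℚ)*(C 2⁻¹)*(C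 2⁻¹)*(C 2⁻¹)*σ*(X : PowerSeries ℚ) + (48 : PowerSeries ℚ)*(C 2⁻¹)*(C 2⁻¹)*(C 2⁻¹)*σ*σ + (48 : PowerSeries ℚ)*(C 2⁻¹)*(C 2⁻¹)*(C 2⁻¹)*σ*σ*(X : PowerSeries ℚ) + (-32 : PowerSeries ℚ)*(C 2⁻¹)*(C 2⁻¹)*(C 2⁻¹)*σ*σ*σ + (-32 : PowerSeries ℚ)*(C 2⁻¹)*(C 2⁻¹)*(C 2⁻¹)*σ*σ*σ*(X : PowerSeries ℚ) + (8 : PowerSeries ℚ)*(C 2⁻¹)*(C 2⁻¹)*(C 2⁻¹)*σ*σ*σ*σ + (8 : PowerSeries ℚ)*(C 2⁻¹)*(C 2⁻¹)*(C 2⁻¹)*σ*σ*σ*σ*(X : PowerSeries ℚ)) * h2 + ((3 : PowerSeries ℚ) + (4 : PowerSeries ℚ)*σ + (-8 : PowerSeries ℚ)*σ*(↑(P⁻¹) : PowerSeries ℚ) + (1 : PowerSeries ℚ)*σ*σ) * hσsq + ((24 : PowerSeries ℚ) + (8 : PowerSeries ℚ)*σ*σ) * hPinv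
  have key := vw_grp a b c d e u v w n (g : ℤ) hE hBD hU
  have keyv := congrArg (Units.val) key
  simp only [Units.val_mul, hnv] at keyv
  have hCu : C (-(2 : ℚ) ^ (-(g : ℤ)))
      = -((u ^ (-(g : ℤ)) : (PowerSeries ℚ)ˣ) : PowerSeries ℚ) := by
    have h1 : (u ^ (-(g : ℤ)) : (PowerSeries ℚ)ˣ)
        = Units.map (C : ℚ →+* PowerSeries ℚ).toMonoidHom
            ((Units.mk0 (2 : ℚ) (by norm_num)) ^ (-(g : ℤ))) := by
      rw [hu, map_zpow]
    rw [h1, Units.coe_map, Units.val_zpow_eq_zpow_val, Units.val_mk0]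
    simp [map_neg]
  simp only [Units.val_mul]
  rw [hCu]
  linear_combination keyv
end
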